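/- Let G be a finite abelian p-group and let X, Y be subgroups of G containing pG with |G : X| = |G : Y| ≤ p^2. Then X and Y are isomorphic as abstract groups if and only if (ℓ(X), L(X)) = (ℓ(Y), L(Y)). -/

import Mathlib

/-- The `p^i`-torsion subgroup `G[p^i] = {x ∈ G : p^i • x = 0}`. -/
def pTors (p i : ℕ) (G : Type*) [AddCommGroup G] : AddSubgroup G where
  carrier := {x | (p ^ i) • x = 0}
  zero_mem' := by simp
  add_mem' := by
    intro a b ha hb
    simp only [Set.mem_setOf_eq, smul_add] at *
    rw [ha, hb, add_zero]
  neg_mem' := by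
    intro a ha
    simp only [Set.mem_setOf_eq, smul_neg] at *
    rw [ha, neg_zero]

/-- The lower `T`-level `ℓ_T(M) = 1 + max{ i : T[p^i] ⊆ M ∩ T }` of a subgroup `M`.
For `T = ⊤` this is the `G`-level `ℓ(M)`. -/
noncomputable def levelL (p : ℕ) {G : Type*} [AddCommGroup G] (T M : AddSubgroup G) : ℕ :=
  1 + sSup {i : ℕ | pTors p i G ⊓ T ≤ M ⊓ T}

/-- The upper `T`-level `L_T(M) = min{ j : T[p^j] + (M ∩ T) = T }` of a subgroup `M`.
For `T = ⊤` this is the `G`-level `L(M)`. -/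
noncomputable def levelU (p : ℕ) {G : Type*} [AddCommGroup G] (T M : AddSubgroup G) : ℕ :=
  sInf {j : ℕ | (pTors p j G ⊓ T) ⊔ (M ⊓ T) = T}

/-- The subgroup `pG` of `G`. -/
def pMul (p : ℕ) (G : Type*) [AddCommGroup G] : AddSubgroup G :=
  (AddMonoidHom.mk' (fun x : G => p • x) (fun a b => smul_add p a b)).range


section Helpers

variable {p : ℕ} [hp : Fact p.Prime]

/-- cast between `ZMod`s of equal modulus -/
def zmodCongr {a b : ℕ} (h : a = b) : ZMod a ≃+ ZMod b := h ▸ AddEquiv.refl _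

lemma gcd_pow_pow (e k : ℕ) : Nat.gcd (p ^ e) (p ^ k) = p ^ min e k := by
  refine Nat.dvd_antisymm ?_ (Nat.dvd_gcd (pow_dvd_pow p (min_le_left _ _))
    (pow_dvd_pow p (min_le_right _ _)))
  obtain ⟨j, hj, hgcd⟩ := (Nat.dvd_prime_pow hp.out).mp (Nat.gcd_dvd_left (p ^ e) (p ^ k))
  have hjk : j ≤ k := (Nat.pow_dvd_pow_iff_le_right hp.out.one_lt).mp
    (hgcd ▸ Nat.gcd_dvd_right (p ^ e) (p ^ k))
  rw [hgcd]
  exact pow_dvd_pow p (le_min hj hjk)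

/-- number of `p^k`-torsion points of `ZMod (p^e)` -/
lemma card_torsion_zmod (e k : ℕ) :
    Nat.card {z : ZMod (p ^ e) // p ^ k • z = 0} = p ^ min k e := by
  have hpe : (p : ℕ) ^ e ≠ 0 := pow_ne_zero _ hp.out.pos.ne'
  set φ : ZMod (p ^ e) →+ ZMod (p ^ e) :=
    AddMonoidHom.mk' (fun z => p ^ k • z) (fun a b => smul_add _ a b) with hφ
  have hker : Nat.card {z : ZMod (p ^ e) // p ^ k • z = 0} = Nat.card φ.ker := by
    refine Nat.card_congr (Equiv.subtypeEquivRight fun z => ?_)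
    simp [hφ, AddMonoidHom.mem_ker]
  have hrange : φ.range = AddSubgroup.zmultiples (((p ^ k : ℕ) : ZMod (p ^ e))) := by
    apply le_antisymm
    · rintro _ ⟨w, rfl⟩
      obtain ⟨m, rfl⟩ := ZMod.natCast_rightInverse.surjective w
      refine AddSubgroup.mem_zmultiples_iff.mpr ⟨(m : ℤ), ?_⟩
      show (m : ℤ) • ((p^k : ℕ) : ZMod (p^e)) = φ ((m : ℕ) : ZMod (p^e))
      rw [natCast_zsmul]
      simp only [hφ, AddMonoidHom.mk'_apply, nsmul_eq_mul]
      push_cast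
      ring
    · rintro z hz
      obtain ⟨n, rfl⟩ := AddSubgroup.mem_zmultiples_iff.mp hz
      refine ⟨n • 1, ?_⟩
      rw [map_zsmul]
      congr 1
      simp [hφ, nsmul_eq_mul]
  have hcardrange : Nat.card φ.range = p ^ e / p ^ min e k := by
    rw [hrange, Nat.card_zmultiples, ZMod.addOrderOf_coe _ hpe, gcd_pow_pow]
  have hquot := AddSubgroup.card_eq_card_quotient_mul_card_addSubgroup φ.ker
  have hqr : Nat.card (ZMod (p ^ e) ⧸ φ.ker) = Nat.card φ.range :=
    Nat.card_congr (QuotientAddGroup.quotientKerEquivRange φ).toEquiv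
  rw [hker]
  have hdvd : p ^ min e k ∣ p ^ e := pow_dvd_pow p (min_le_left _ _)
  have hq : p ^ e / p ^ min e k * p ^ min e k = p ^ e := Nat.div_mul_cancel hdvd
  have hpm : (0:ℕ) < p ^ e / p ^ min e k :=
    Nat.div_pos (Nat.le_of_dvd (pow_pos hp.out.pos e) hdvd) (pow_pos hp.out.pos _)
  have h1 := hquot
  rw [hqr, hcardrange, Nat.card_zmod] at h1
  have key : p ^ e / p ^ min e k * p ^ min e k = p ^ e / p ^ min e k * Nat.card φ.ker := by
    rw [hq]; exact h1
  rw [Nat.min_comm k e]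
  exact (Nat.eq_of_mul_eq_mul_left hpm key).symm

end Helpers

section Helpers2

variable {p : ℕ} [hp : Fact p.Prime]

/-- Any finite abelian `p`-group is a product of nontrivial cyclic `p`-groups. -/
lemma normal_form (A : Type*) [AddCommGroup A] [Finite A]
    (hA : ∀ a : A, ∃ k : ℕ, p ^ k • a = 0) :
    ∃ (ι : Type) (_ : Fintype ι) (e : ι → ℕ), (∀ i, e i ≠ 0) ∧
      Nonempty (A ≃+ ∀ i, ZMod (p ^ e i)) := by
  classical
  obtain ⟨ι, hι, n, hn, ⟨eqv⟩⟩ := AddCommGroup.equiv_directSum_zmod_of_finite' A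
  let E : A ≃+ ∀ i, ZMod (n i) := eqv.trans (DirectSum.addEquivProd _)
  have key : ∀ i, ∃ c : ℕ, n i = p ^ c := by
    intro i
    obtain ⟨k, hk⟩ := hA (E.symm (Pi.single i (1 : ZMod (n i))))
    have hk' : p ^ k • (Pi.single i (1 : ZMod (n i)) : ∀ j, ZMod (n j)) = 0 := by
      have := congrArg E hk
      rwa [map_nsmul, map_zero, AddEquiv.apply_symm_apply] at this
    have h1 : p ^ k • (1 : ZMod (n i)) = 0 := by
      have := congrFun hk' i
      simpa using this
    have hdvd : n i ∣ p ^ k := by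
      have : ((p ^ k : ℕ) : ZMod (n i)) = 0 := by
        rw [← h1, nsmul_eq_mul, mul_one]
      exact (ZMod.natCast_eq_zero_iff _ _).mp this
    obtain ⟨c, _, hc⟩ := (Nat.dvd_prime_pow hp.out).mp hdvd
    exact ⟨c, hc⟩
  choose e he using key
  refine ⟨ι, hι, e, fun i => ?_, ⟨E.trans (AddEquiv.piCongrRight fun i => zmodCongr (he i))⟩⟩
  intro h0
  have := hn i
  rw [he i, h0, pow_zero] at this
  omega

lemma sum_min_succ {ι : Type} [Fintype ι] (e : ι → ℕ) (k : ℕ) [DecidablePred fun i => k < e i] :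
    ∑ i, min (k + 1) (e i) = (∑ i, min k (e i)) + (Finset.univ.filter fun i => k < e i).card := by
  rw [Finset.card_filter, ← Finset.sum_add_distrib]
  apply Finset.sum_congr rfl
  intro i _
  rcases Nat.lt_or_ge k (e i) with h | h
  · rw [if_pos h]; omega
  · rw [if_neg (Nat.not_lt.mpr h)]; omega

lemma filter_card_eq {ι κ : Type} [Fintype ι] [Fintype κ] (e : ι → ℕ) (f : κ → ℕ)
    (he : ∀ i, e i ≠ 0) (hf : ∀ j, f j ≠ 0)
    (h : ∀ k, ∑ i, min k (e i) = ∑ j, min k (f j)) (m : ℕ) :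
    Fintype.card {i // e i = m} = Fintype.card {j // f j = m} := by
  classical
  have hc : ∀ k, (Finset.univ.filter fun i => k < e i).card
      = (Finset.univ.filter fun j => k < f j).card := by
    intro k
    have h1 := h k
    have h2 := h (k + 1)
    rw [sum_min_succ e k, sum_min_succ f k, h1] at h2
    omega
  have hsplit : ∀ {α : Type} [Fintype α] (g : α → ℕ) (k : ℕ),
      (Finset.univ.filter fun i => k < g i).card
        = (Finset.univ.filter fun i => k + 1 < g i).card
          + (Finset.univ.filter fun i => g i = k + 1).card := by
    intro α _ g k
    classical
    rw [← Finset.card_union_of_disjoint]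
    · congr 1
      ext i
      simp only [Finset.mem_filter, Finset.mem_union, Finset.mem_univ, true_and]
      omega
    · rw [Finset.disjoint_filter]
      intro i _ h1 h2
      omega
  rcases m with _ | m
  · rw [Fintype.card_eq_zero_iff.mpr, Fintype.card_eq_zero_iff.mpr]
    · exact ⟨fun j => hf j.1 j.2⟩
    · exact ⟨fun i => he i.1 i.2⟩
  · rw [Fintype.card_subtype, Fintype.card_subtype]
    have hsE := hsplit e m
    have hsF := hsplit f m
    have := hc m
    have := hc (m + 1)
    omega

lemma equiv_of_filter_card {ι κ : Type} [Fintype ι] [Fintype κ] (e : ι → ℕ) (f : κ → ℕ)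
    (h : ∀ m, Fintype.card {i // e i = m} = Fintype.card {j // f j = m}) :
    ∃ σ : ι ≃ κ, ∀ i, f (σ i) = e i := by
  classical
  have τ : ∀ m, {i // e i = m} ≃ {j // f j = m} := fun m => Fintype.equivOfCardEq (h m)
  refine ⟨(Equiv.sigmaFiberEquiv e).symm.trans
    ((Equiv.sigmaCongrRight τ).trans (Equiv.sigmaFiberEquiv f)), fun i => ?_⟩
  exact (τ (e i) ⟨i, rfl⟩).2

lemma card_torsion_of_equiv {C : Type*} [AddCommGroup C] {ι : Type} [Fintype ι] {e : ι → ℕ}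
    (E : C ≃+ ∀ i, ZMod (p ^ e i)) (k : ℕ) :
    Nat.card {c : C // p ^ k • c = 0} = p ^ ∑ i, min k (e i) := by
  have h1 : Nat.card {c : C // p ^ k • c = 0}
      = Nat.card {x : ∀ i : ι, ZMod (p ^ e i) // p ^ k • x = 0} := by
    refine Nat.card_congr (Equiv.subtypeEquiv E.toEquiv fun c => ?_)
    constructor
    · intro hc
      show p ^ k • E c = 0
      rw [← map_nsmul, hc, map_zero]
    · intro hc
      have hc' : p ^ k • E c = 0 := hc
      apply E.injective
      rw [map_nsmul, hc', map_zero]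
  have h2 : Nat.card {x : ∀ i : ι, ZMod (p ^ e i) // p ^ k • x = 0}
      = Nat.card (∀ i : ι, {z : ZMod (p ^ e i) // p ^ k • z = 0}) := by
    refine Nat.card_congr (Equiv.trans (Equiv.subtypeEquivRight fun x => ?_)
      (Equiv.subtypePiEquivPi))
    constructor
    · intro hx i; exact congrFun hx i
    · intro hx; funext i; exact hx i
  rw [h1, h2, Nat.card_pi, Finset.prod_congr rfl fun i _ => card_torsion_zmod (e i) k]
  exact Finset.prod_pow_eq_pow_sum _ _ _

/-- Finite abelian `p`-groups with equal numbers of `p^k`-torsion points for all `k`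
are isomorphic. -/
lemma iso_of_card_torsion (A B : Type*) [AddCommGroup A] [AddCommGroup B] [Finite A] [Finite B]
    (hA : ∀ a : A, ∃ k : ℕ, p ^ k • a = 0) (hB : ∀ b : B, ∃ k : ℕ, p ^ k • b = 0)
    (h : ∀ k : ℕ, Nat.card {a : A // p ^ k • a = 0} = Nat.card {b : B // p ^ k • b = 0}) :
    Nonempty (A ≃+ B) := by
  classical
  obtain ⟨ι, hι, e, he, ⟨EA⟩⟩ := normal_form A hA
  obtain ⟨κ, hκ, f, hf, ⟨EB⟩⟩ := normal_form B hB
  have hsum : ∀ k, ∑ i, min k (e i) = ∑ j, min k (f j) := fun k =>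
    Nat.pow_right_injective hp.out.two_le
      (by show p ^ (∑ i : ι, min k (e i)) = p ^ (∑ j : κ, min k (f j))
          rw [← card_torsion_of_equiv EA k, ← card_torsion_of_equiv EB k]; exact h k)
  obtain ⟨σ, hσ⟩ := equiv_of_filter_card e f (filter_card_eq e f he hf hsum)
  let F : (∀ j : κ, ZMod (p ^ f j)) ≃+ (∀ i : ι, ZMod (p ^ f (σ i))) :=
    { toEquiv := (Equiv.piCongrLeft (fun j => ZMod (p ^ f j)) σ).symm
      map_add' := fun a b => rfl }
  exact ⟨EA.trans ((AddEquiv.piCongrRight fun i =>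
    zmodCongr (congrArg (p ^ ·) (hσ i).symm)).trans (F.symm.trans EB.symm))⟩

end Helpers2

section Main

variable {p : ℕ} [hp : Fact p.Prime] {G : Type*} [AddCommGroup G]

lemma mem_pTors {i : ℕ} {x : G} : x ∈ pTors p i G ↔ p ^ i • x = 0 := Iff.rfl

lemma pTors_mono {i j : ℕ} (h : i ≤ j) : pTors p i G ≤ pTors p j G := by
  intro x hx
  obtain ⟨c, rfl⟩ := Nat.exists_eq_add_of_le h
  rw [mem_pTors] at hx ⊢
  rw [pow_add, mul_nsmul, hx, smul_zero]

lemma pTors_zero : pTors p 0 G = ⊥ := by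
  ext x
  simp [mem_pTors]

lemma exists_pTors_top [Finite G] (hpG : ∀ g : G, ∃ k : ℕ, p ^ k • g = 0) :
    ∃ e : ℕ, pTors p e G = ⊤ := by
  classical
  have := Fintype.ofFinite G
  choose k hk using hpG
  refine ⟨Finset.univ.sup k, ?_⟩
  rw [eq_top_iff]
  intro g _
  exact pTors_mono (Finset.le_sup (Finset.mem_univ g)) (hk g)

/-- `relindex` vs cardinality of the intersection. -/
lemma relindex_mul_card_inf [Finite G] (M T : AddSubgroup G) :
    M.relIndex T * Nat.card ↥(M ⊓ T) = Nat.card ↥T := by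
  have h1 : Nat.card ↥(M ⊓ T) = Nat.card ↥(M.addSubgroupOf T) := by
    rw [← AddSubgroup.inf_addSubgroupOf_right]
    exact (Nat.card_congr (AddSubgroup.addSubgroupOfEquivOfLe inf_le_right).toEquiv).symm
  rw [h1, AddSubgroup.relIndex, mul_comm, AddSubgroup.card_mul_index]

lemma card_inf_pos [Finite G] (M T : AddSubgroup G) : 0 < Nat.card ↥(M ⊓ T) :=
  Nat.card_pos

/-- torsion points of the subgroup vs intersection with `pTors`. -/
lemma card_inf_pTors (M : AddSubgroup G) (k : ℕ) :
    Nat.card ↥(M ⊓ pTors p k G) = Nat.card {x : ↥M // p ^ k • x = 0} := by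
  refine Nat.card_congr ⟨fun x => ⟨⟨x.1, x.2.1⟩, ?_⟩, fun y => ⟨y.1.1, y.1.2, ?_⟩,
    fun x => rfl, fun y => rfl⟩
  · have h2 : p ^ k • (x.1 : G) = 0 := mem_pTors.mp x.2.2
    exact Subtype.ext (by simpa using h2)
  · refine mem_pTors.mpr ?_
    have h3 : ((p ^ k • y.1 : ↥M) : G) = 0 := by rw [y.2]; rfl
    rwa [AddSubgroup.coe_nsmul] at h3

/-- `T ⊔ M = ⊤ ↔ relindex = index` for finite abelian groups. -/
lemma sup_eq_top_iff_relindex [Finite G] (M T : AddSubgroup G) :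
    T ⊔ M = ⊤ ↔ M.relIndex T = M.index := by
  have key : M.relIndex T * (T ⊔ M).index = M.index := by
    rw [← AddSubgroup.relIndex_sup_right T M]
    exact AddSubgroup.relIndex_mul_index le_sup_right
  constructor
  · intro h
    rw [h, AddSubgroup.index_top, mul_one] at key
    exact key
  · intro h
    have hne : M.relIndex T ≠ 0 := by
      intro h0
      have hcpos : 0 < Nat.card ↥T := Nat.card_pos
      have h2 := relindex_mul_card_inf M T
      rw [h0, zero_mul] at h2
      omega
    have h1 : M.relIndex T * (T ⊔ M).index = M.relIndex T * 1 := by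
      rw [mul_one, key, h]
    have h2 : (T ⊔ M).index = 1 :=
      Nat.eq_of_mul_eq_mul_left (Nat.pos_of_ne_zero hne) h1
    exact AddSubgroup.index_eq_one.mp h2

/-- monotonicity of the relindex function. -/
lemma relindex_pTors_dvd [Finite G] (M : AddSubgroup G) {k l : ℕ} (h : k ≤ l) :
    M.relIndex (pTors p k G) ∣ M.relIndex (pTors p l G) := by
  set Tk := pTors p k G
  set Tl := pTors p l G
  have hTkl : Tk ≤ Tl := pTors_mono h
  set H := M ⊓ Tl
  have h1 : M.relIndex Tl = H.relIndex Tl := (AddSubgroup.inf_relIndex_right M Tl).symm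
  have h2 : M.relIndex Tk = H.relIndex Tk := by
    rw [← AddSubgroup.inf_relIndex_right M Tk, ← AddSubgroup.inf_relIndex_right H Tk]
    congr 1
    rw [inf_assoc]
    congr 1
    exact (inf_eq_right.mpr hTkl).symm
  have h3 : H.relIndex (H ⊔ Tk) = H.relIndex Tk := AddSubgroup.relIndex_sup_left _ _
  have h4 := AddSubgroup.relIndex_mul_relIndex H (H ⊔ Tk) Tl le_sup_left
    (sup_le inf_le_right hTkl)
  rw [h1, h2, ← h3, ← h4]
  exact Dvd.intro _ rfl

end Main

/-- Subgroups `X, Y ⊇ pG` of equal index at most `p²` are isomorphic as abstract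
groups iff they have the same `G`-levels. -/
theorem stmt9 (p : ℕ) [Fact p.Prime] (G : Type*) [AddCommGroup G] [Finite G]
    (hpG : ∀ g : G, ∃ k : ℕ, p ^ k • g = 0)
    (X Y : AddSubgroup G) (hX : pMul p G ≤ X) (hY : pMul p G ≤ Y)
    (hXY : X.index = Y.index) (hle : Y.index ≤ p ^ 2) :
    Nonempty (X ≃+ Y) ↔
      (levelL p ⊤ X = levelL p ⊤ Y ∧ levelU p ⊤ X = levelU p ⊤ Y) := by
  classical
  have hpp : p.Prime := Fact.out
  have hlevL : ∀ M : AddSubgroup G, levelL p ⊤ M = 1 + sSup {i : ℕ | pTors p i G ≤ M} := by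
    intro M; unfold levelL; simp only [inf_top_eq]
  have hlevU : ∀ M : AddSubgroup G, levelU p ⊤ M = sInf {j : ℕ | pTors p j G ⊔ M = ⊤} := by
    intro M; unfold levelU; simp only [inf_top_eq]
  obtain ⟨e, he⟩ := exists_pTors_top hpG
  by_cases hXtop : X = ⊤
  · have hYtop : Y = ⊤ :=
      AddSubgroup.index_eq_one.mp (by rw [← hXY, hXtop, AddSubgroup.index_top])
    subst hXtop
    subst hYtop
    exact iff_of_true ⟨AddEquiv.refl _⟩ ⟨rfl, rfl⟩
  have hYtop : Y ≠ ⊤ := fun h =>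
    hXtop (AddSubgroup.index_eq_one.mp (by rw [hXY, h, AddSubgroup.index_top]))
  have chS : ∀ (M : AddSubgroup G), M ≠ ⊤ → ∀ k : ℕ,
      (pTors p k G ≤ M ↔ k ≤ sSup {i : ℕ | pTors p i G ≤ M}) := by
    intro M hM k
    have hne : (0:ℕ) ∈ {i : ℕ | pTors p i G ≤ M} := by
      show pTors p 0 G ≤ M
      rw [pTors_zero]
      exact bot_le
    have hbdd : BddAbove {i : ℕ | pTors p i G ≤ M} := by
      refine ⟨e, fun i hi => ?_⟩
      by_contra hlt
      push_neg at hlt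
      exact hM (top_unique (he ▸ (pTors_mono hlt.le).trans hi))
    constructor
    · exact fun h => le_csSup hbdd h
    · intro hk
      have hmem := Nat.sSup_mem ⟨0, hne⟩ hbdd
      exact (pTors_mono hk).trans hmem
  have chU : ∀ (M : AddSubgroup G) (k : ℕ),
      (pTors p k G ⊔ M = ⊤ ↔ sInf {j : ℕ | pTors p j G ⊔ M = ⊤} ≤ k) := by
    intro M k
    have hne : pTors p e G ⊔ M = ⊤ := by rw [he, top_sup_eq]
    constructor
    · exact fun h => Nat.sInf_le h
    · intro hk
      have hmem := Nat.sInf_mem (⟨e, hne⟩ : Set.Nonempty {j : ℕ | pTors p j G ⊔ M = ⊤})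
      refine top_unique ?_
      calc ⊤ = pTors p (sInf {j : ℕ | pTors p j G ⊔ M = ⊤}) G ⊔ M := hmem.symm
        _ ≤ pTors p k G ⊔ M := sup_le_sup_right (pTors_mono hk) M
  have hcardG : ∃ n, Nat.card G = p ^ n := by
    obtain ⟨ι, hι, ee, hee, ⟨E⟩⟩ := normal_form (A := G) hpG
    refine ⟨∑ i, ee i, ?_⟩
    rw [Nat.card_congr E.toEquiv, Nat.card_pi]
    rw [Finset.prod_congr rfl fun i _ => Nat.card_zmod (p ^ ee i)]
    exact Finset.prod_pow_eq_pow_sum _ _ _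
  obtain ⟨n, hn⟩ := hcardG
  obtain ⟨d, hd2, hXd⟩ : ∃ d, d ≤ 2 ∧ X.index = p ^ d := by
    have hdvd : X.index ∣ p ^ n := hn ▸ AddSubgroup.index_dvd_card X
    obtain ⟨d, _, hdE⟩ := (Nat.dvd_prime_pow hpp).mp hdvd
    refine ⟨d, ?_, hdE⟩
    rw [← Nat.pow_le_pow_iff_right hpp.one_lt, ← hdE, hXY]
    exact hle
  have hYd : Y.index = p ^ d := by rw [← hXY]; exact hXd
  constructor
  · rintro ⟨E⟩
    have hcard : ∀ k, Nat.card ↥(X ⊓ pTors p k G) = Nat.card ↥(Y ⊓ pTors p k G) := by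
      intro k
      rw [card_inf_pTors, card_inf_pTors]
      refine Nat.card_congr (Equiv.subtypeEquiv E.toEquiv fun x => ?_)
      constructor
      · intro hx
        show p ^ k • E x = 0
        rw [← map_nsmul, hx, map_zero]
      · intro hx
        have hx' : p ^ k • E x = 0 := hx
        apply E.injective
        rw [map_nsmul, hx', map_zero]
    have hrel : ∀ k, X.relIndex (pTors p k G) = Y.relIndex (pTors p k G) := by
      intro k
      have h1 := relindex_mul_card_inf X (pTors p k G)
      have h2 := relindex_mul_card_inf Y (pTors p k G)
      rw [hcard k] at h1
      exact Nat.eq_of_mul_eq_mul_right (card_inf_pos Y (pTors p k G)) (h1.trans h2.symm)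
    constructor
    · rw [hlevL X, hlevL Y]
      have : {i : ℕ | pTors p i G ≤ X} = {i : ℕ | pTors p i G ≤ Y} := by
        ext i
        simp only [Set.mem_setOf_eq]
        rw [← AddSubgroup.relIndex_eq_one, ← AddSubgroup.relIndex_eq_one, hrel i]
      rw [this]
    · rw [hlevU X, hlevU Y]
      have : {j : ℕ | pTors p j G ⊔ X = ⊤} = {j : ℕ | pTors p j G ⊔ Y = ⊤} := by
        ext j
        simp only [Set.mem_setOf_eq]
        rw [sup_eq_top_iff_relindex, sup_eq_top_iff_relindex, hrel j, hXY]
      rw [this]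
  · rintro ⟨h1, h2⟩
    rw [hlevL X, hlevL Y] at h1
    rw [hlevU X, hlevU Y] at h2
    have h1' : sSup {i : ℕ | pTors p i G ≤ X} = sSup {i : ℕ | pTors p i G ≤ Y} := by omega
    have hrel : ∀ k, X.relIndex (pTors p k G) = Y.relIndex (pTors p k G) := by
      intro k
      by_cases hkX : pTors p k G ≤ X
      · have hkY : pTors p k G ≤ Y := (chS Y hYtop k).mpr (h1' ▸ (chS X hXtop k).mp hkX)
        rw [AddSubgroup.relIndex_eq_one.mpr hkX, AddSubgroup.relIndex_eq_one.mpr hkY]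
      · by_cases hsX : pTors p k G ⊔ X = ⊤
        · have hsY : pTors p k G ⊔ Y = ⊤ := (chU Y k).mpr (h2 ▸ (chU X k).mp hsX)
          rw [(sup_eq_top_iff_relindex X (pTors p k G)).mp hsX,
            (sup_eq_top_iff_relindex Y (pTors p k G)).mp hsY, hXY]
        · have hkY : ¬ pTors p k G ≤ Y := fun hYk =>
            hkX ((chS X hXtop k).mpr (h1' ▸ (chS Y hYtop k).mp hYk))
          have hsY : ¬ pTors p k G ⊔ Y = ⊤ := fun hYk =>
            hsX ((chU X k).mpr (h2 ▸ (chU Y k).mp hYk))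
          have key : ∀ (M : AddSubgroup G), M.index = p ^ d → ¬ pTors p k G ≤ M →
              ¬ (pTors p k G ⊔ M = ⊤) → M.relIndex (pTors p k G) = p := by
            intro M hMd hM1 hM2
            have hdvd := AddSubgroup.relIndex_dvd_index_of_normal M (pTors p k G)
            rw [hMd] at hdvd
            obtain ⟨c, hcd, hc⟩ := (Nat.dvd_prime_pow hpp).mp hdvd
            have hc0 : c ≠ 0 := by
              intro h0
              rw [h0, pow_zero] at hc
              exact hM1 (AddSubgroup.relIndex_eq_one.mp hc)
            have hcd' : c ≠ d := by
              intro hcd0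
              rw [hcd0, ← hMd] at hc
              exact hM2 ((sup_eq_top_iff_relindex M (pTors p k G)).mpr hc)
            have hc1 : c = 1 := by omega
            rw [hc, hc1, pow_one]
          rw [key X hXd hkX hsX, key Y hYd hkY hsY]
    have hcard : ∀ k, Nat.card ↥(X ⊓ pTors p k G) = Nat.card ↥(Y ⊓ pTors p k G) := by
      intro k
      have hX1 := relindex_mul_card_inf X (pTors p k G)
      have hY1 := relindex_mul_card_inf Y (pTors p k G)
      rw [hrel k] at hX1
      have hpos : 0 < Y.relIndex (pTors p k G) := by
        rcases Nat.eq_zero_or_pos (Y.relIndex (pTors p k G)) with h0 | h0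
        · rw [h0, zero_mul] at hY1
          have := (Nat.card_pos (α := ↥(pTors p k G)))
          omega
        · exact h0
      exact Nat.eq_of_mul_eq_mul_left hpos (hX1.trans hY1.symm)
    have hXt : ∀ x : ↥X, ∃ k : ℕ, p ^ k • x = 0 := by
      intro x
      obtain ⟨k, hk⟩ := hpG x.1
      exact ⟨k, Subtype.ext (by simpa using hk)⟩
    have hYt : ∀ y : ↥Y, ∃ k : ℕ, p ^ k • y = 0 := by
      intro y
      obtain ⟨k, hk⟩ := hpG y.1
      exact ⟨k, Subtype.ext (by simpa using hk)⟩
    refine iso_of_card_torsion ↥X ↥Y hXt hYt fun k => ?_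
    rw [← card_inf_pTors, ← card_inf_pTors]
    exact hcard k
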